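/- arXiv:2204.08081 — 4 statements merged into one kernel-verified Lean document; each statement's English description precedes it below -/
import Mathlib

section
/- Let U_T, U_T^ε ∈ ℝⁿ satisfy ‖U_T − U_T^ε‖ ≤ ε for some ε > 0, and let 0 ≤ t ≤ T. Then the cut-off projections applied to the two final data satisfy the stability estimate ‖P^ε U(t) − P^ε U^ε(t)‖ ≤ e^{M_ε (T−t)} ε. (Paper's Theorem 3.) -/
open scoped RealInnerProductSpace BigOperators

/-- Paper's Theorem 3: stability estimate
`‖P^ε U(t) − P^ε U^ε(t)‖ ≤ e^{M_ε (T−t)} ε`. -/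
theorem cutoff_projection_stability (n : ℕ) (hn : 0 < n)
    (φ : OrthonormalBasis (Fin n) ℝ (EuclideanSpace ℝ (Fin n)))
    (lam : Fin n → ℝ) (hlam : ∀ i, 0 ≤ lam i)
    (Me : ℝ) (hMe : 0 < Me)
    (T t : ℝ) (hT : 0 < T) (ht0 : 0 ≤ t) (htT : t ≤ T)
    (UT UTe : EuclideanSpace ℝ (Fin n)) (ε : ℝ) (hε : 0 < ε)
    (hnoise : ‖UT - UTe‖ ≤ ε) :
    ‖(∑ i ∈ Finset.univ.filter (fun i => lam i ≤ Me),
        (Real.exp (lam i * (T - t)) * ⟪UT, φ i⟫) • φ i) -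
      ∑ i ∈ Finset.univ.filter (fun i => lam i ≤ Me),
        (Real.exp (lam i * (T - t)) * ⟪UTe, φ i⟫) • φ i‖
      ≤ Real.exp (Me * (T - t)) * ε := by
  set S := Finset.univ.filter (fun i => lam i ≤ Me) with hS
  set v := UT - UTe with hv
  set C := Real.exp (Me * (T - t)) with hC
  have hTt : 0 ≤ T - t := sub_nonneg.2 htT
  have hC0 : 0 < C := Real.exp_pos _
  have hcombine :
      (∑ i ∈ S, (Real.exp (lam i * (T - t)) * ⟪UT, φ i⟫) • φ i) -
        ∑ i ∈ S, (Real.exp (lam i * (T - t)) * ⟪UTe, φ i⟫) • φ i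
      = ∑ i ∈ S, (Real.exp (lam i * (T - t)) * ⟪v, φ i⟫) • φ i := by
    rw [← Finset.sum_sub_distrib]
    refine Finset.sum_congr rfl fun i _ => ?_
    rw [← sub_smul, hv, inner_sub_left]
    ring_nf
  rw [hcombine]
  have hsq : ‖∑ i ∈ S, (Real.exp (lam i * (T - t)) * ⟪v, φ i⟫) • φ i‖ ^ 2
      = ∑ i ∈ S, (Real.exp (lam i * (T - t)) * ⟪v, φ i⟫) ^ 2 := by
    rw [← real_inner_self_eq_norm_sq, φ.orthonormal.inner_sum]
    simp [sq]
  have hpars : ∑ i, ⟪v, φ i⟫ ^ 2 = ‖v‖ ^ 2 := by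
    rw [← real_inner_self_eq_norm_sq, ← φ.sum_inner_mul_inner v v]
    refine Finset.sum_congr rfl fun i _ => ?_
    rw [sq, real_inner_comm v (φ i)]
  have hbound : ‖∑ i ∈ S, (Real.exp (lam i * (T - t)) * ⟪v, φ i⟫) • φ i‖ ^ 2
      ≤ (C * ε) ^ 2 := by
    rw [hsq]
    have h1 : ∑ i ∈ S, (Real.exp (lam i * (T - t)) * ⟪v, φ i⟫) ^ 2
        ≤ ∑ i ∈ S, C ^ 2 * ⟪v, φ i⟫ ^ 2 := by
      refine Finset.sum_le_sum fun i hi => ?_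
      rw [mul_pow]
      have hiMe : lam i ≤ Me := (Finset.mem_filter.1 hi).2
      have : Real.exp (lam i * (T - t)) ≤ C := by
        rw [hC]
        exact Real.exp_le_exp.2 (mul_le_mul_of_nonneg_right hiMe hTt)
      exact mul_le_mul_of_nonneg_right
        (pow_le_pow_left₀ (Real.exp_pos _).le this 2) (sq_nonneg _)
    have h2 : ∑ i ∈ S, C ^ 2 * ⟪v, φ i⟫ ^ 2 ≤ ∑ i, C ^ 2 * ⟪v, φ i⟫ ^ 2 :=
      Finset.sum_le_sum_of_subset_of_nonneg (Finset.filter_subset _ _)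
        (fun i _ _ => mul_nonneg (sq_nonneg _) (sq_nonneg _))
    have h3 : ∑ i, C ^ 2 * ⟪v, φ i⟫ ^ 2 = C ^ 2 * ‖v‖ ^ 2 := by
      rw [← Finset.mul_sum, hpars]
    calc _ ≤ ∑ i, C ^ 2 * ⟪v, φ i⟫ ^ 2 := h1.trans h2
      _ = C ^ 2 * ‖v‖ ^ 2 := h3
      _ ≤ C ^ 2 * ε ^ 2 := by
          exact mul_le_mul_of_nonneg_left
            (pow_le_pow_left₀ (norm_nonneg _) hnoise 2) (sq_nonneg _)
      _ = (C * ε) ^ 2 := by ring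
  have := Real.sqrt_le_sqrt hbound
  rwa [Real.sqrt_sq (norm_nonneg _), Real.sqrt_sq (by positivity)] at this
end

section
/- Let U_T, U_T^ε ∈ ℝⁿ satisfy ‖U_T − U_T^ε‖ ≤ ε for some ε > 0, let 0 ≤ t ≤ T, and let M_ε > 0. Then the total error between the exact solution and the regularized noisy solution satisfies ‖U(t) − P^ε U^ε(t)‖ ≤ M_ε^{-1} ‖U′(t)‖ + e^{M_ε(T−t)} ε, where U′(t) = − Σ_{i=1}^n λ_i e^{λ_i(T−t)} ⟨U_T, φ_i⟩ φ_i. (Estimate (eee) of the paper's Theorem 4.) -/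
open scoped RealInnerProductSpace BigOperators

lemma norm_sum_sq_aux {E : Type*} [NormedAddCommGroup E] [InnerProductSpace ℝ E]
    {ι : Type*} {v : ι → E} (hv : Orthonormal ℝ v) (l : ι → ℝ) (s : Finset ι) :
    ‖∑ i ∈ s, l i • v i‖ ^ 2 = ∑ i ∈ s, (l i) ^ 2 := by
  rw [← real_inner_self_eq_norm_sq, hv.inner_sum]
  simp [sq]

/-- Estimate (eee) of the paper's Theorem 4:
`‖U(t) − P^ε U^ε(t)‖ ≤ M_ε⁻¹ ‖U′(t)‖ + e^{M_ε(T−t)} ε`. -/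
theorem total_error_bound (n : ℕ) (hn : 0 < n)
    (φ : OrthonormalBasis (Fin n) ℝ (EuclideanSpace ℝ (Fin n)))
    (lam : Fin n → ℝ) (hlam : ∀ i, 0 ≤ lam i)
    (Me : ℝ) (hMe : 0 < Me)
    (T t : ℝ) (hT : 0 < T) (ht0 : 0 ≤ t) (htT : t ≤ T)
    (UT UTe : EuclideanSpace ℝ (Fin n)) (ε : ℝ) (hε : 0 < ε)
    (hnoise : ‖UT - UTe‖ ≤ ε) :
    ‖(∑ i : Fin n, (Real.exp (lam i * (T - t)) * ⟪UT, φ i⟫) • φ i) -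
      ∑ i ∈ Finset.univ.filter (fun i => lam i ≤ Me),
        (Real.exp (lam i * (T - t)) * ⟪UTe, φ i⟫) • φ i‖
      ≤ Me⁻¹ *
          ‖-∑ i : Fin n, (lam i * Real.exp (lam i * (T - t)) * ⟪UT, φ i⟫) • φ i‖
        + Real.exp (Me * (T - t)) * ε := by
  classical
  have hs : (0:ℝ) ≤ T - t := by linarith
  set s := T - t with hs_def
  set a : Fin n → ℝ := fun i => Real.exp (lam i * s) * ⟪UT, φ i⟫ with ha
  set b : Fin n → ℝ := fun i => Real.exp (lam i * s) * ⟪UTe, φ i⟫ with hb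
  set c : Fin n → ℝ := fun i => lam i * Real.exp (lam i * s) * ⟪UT, φ i⟫ with hc
  set Θ := Finset.univ.filter (fun i => lam i ≤ Me) with hΘ
  set Θc := Finset.univ.filter (fun i => ¬ lam i ≤ Me) with hΘc
  have hon := φ.orthonormal
  -- decomposition
  have hsplit :
      (∑ i : Fin n, a i • φ i) - ∑ i ∈ Θ, b i • φ i
        = (∑ i ∈ Θc, a i • φ i) + ∑ i ∈ Θ, (a i - b i) • φ i := by
    have h0 := Finset.sum_filter_add_sum_filter_not Finset.univ
      (fun i => lam i ≤ Me) (fun i => a i • φ i)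
    calc (∑ i : Fin n, a i • φ i) - ∑ i ∈ Θ, b i • φ i
        = ((∑ i ∈ Θ, a i • φ i) + ∑ i ∈ Θc, a i • φ i) - ∑ i ∈ Θ, b i • φ i := by
          rw [h0]
      _ = (∑ i ∈ Θc, a i • φ i) + ∑ i ∈ Θ, (a i • φ i - b i • φ i) := by
          rw [Finset.sum_sub_distrib]; abel
      _ = (∑ i ∈ Θc, a i • φ i) + ∑ i ∈ Θ, (a i - b i) • φ i := by
          simp [sub_smul]
  rw [hsplit]
  have hUp : ‖-∑ i : Fin n, c i • φ i‖ ^ 2 = ∑ i : Fin n, (c i) ^ 2 := by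
    rw [norm_neg, norm_sum_sq_aux hon]
  -- bound first term
  have h1 : ‖∑ i ∈ Θc, a i • φ i‖ ≤ Me⁻¹ * ‖-∑ i : Fin n, c i • φ i‖ := by
    have hsq : ‖∑ i ∈ Θc, a i • φ i‖ ^ 2 ≤ (Me⁻¹ * ‖-∑ i : Fin n, c i • φ i‖) ^ 2 := by
      rw [norm_sum_sq_aux hon, mul_pow, hUp]
      have step : ∑ i ∈ Θc, (a i) ^ 2 ≤ ∑ i ∈ Θc, Me⁻¹ ^ 2 * (c i) ^ 2 := by
        apply Finset.sum_le_sum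
        intro i hi
        have hMi : Me < lam i := by
          simp only [hΘc, Finset.mem_filter] at hi
          exact lt_of_not_ge hi.2
        have hci : c i = lam i * a i := by simp only [hc, ha]; ring
        have h1' : (1:ℝ) ≤ Me⁻¹ ^ 2 * lam i ^ 2 := by
          rw [inv_pow, ← div_eq_inv_mul, le_div_iff₀ (by positivity), one_mul]
          nlinarith
        calc (a i) ^ 2 = 1 * (a i) ^ 2 := (one_mul _).symm
          _ ≤ (Me⁻¹ ^ 2 * lam i ^ 2) * (a i) ^ 2 :=
              mul_le_mul_of_nonneg_right h1' (sq_nonneg _)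
          _ = Me⁻¹ ^ 2 * (c i) ^ 2 := by rw [hci]; ring
      calc ∑ i ∈ Θc, (a i) ^ 2 ≤ ∑ i ∈ Θc, Me⁻¹ ^ 2 * (c i) ^ 2 := step
        _ ≤ ∑ i : Fin n, Me⁻¹ ^ 2 * (c i) ^ 2 := by
            apply Finset.sum_le_sum_of_subset_of_nonneg (Finset.filter_subset _ _)
            intro i _ _; positivity
        _ = Me⁻¹ ^ 2 * ∑ i : Fin n, (c i) ^ 2 := by rw [Finset.mul_sum]
    have := Real.sqrt_le_sqrt hsq
    rwa [Real.sqrt_sq (norm_nonneg _), Real.sqrt_sq (by positivity)] at this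
  -- bound second term
  have h2 : ‖∑ i ∈ Θ, (a i - b i) • φ i‖ ≤ Real.exp (Me * s) * ε := by
    have hsq : ‖∑ i ∈ Θ, (a i - b i) • φ i‖ ^ 2 ≤ (Real.exp (Me * s) * ‖UT - UTe‖) ^ 2 := by
      rw [norm_sum_sq_aux hon, mul_pow]
      have hd : ‖UT - UTe‖ ^ 2 = ∑ i : Fin n, (⟪UT - UTe, φ i⟫) ^ 2 := by
        conv_lhs => rw [← φ.sum_repr' (UT - UTe)]
        rw [norm_sum_sq_aux hon]
        exact Finset.sum_congr rfl fun i _ => by rw [real_inner_comm]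
      rw [hd, Finset.mul_sum]
      calc ∑ i ∈ Θ, (a i - b i) ^ 2
          ≤ ∑ i ∈ Θ, Real.exp (Me * s) ^ 2 * (⟪UT - UTe, φ i⟫) ^ 2 := by
            apply Finset.sum_le_sum
            intro i hi
            have hMi : lam i ≤ Me := by
              simp only [hΘ, Finset.mem_filter] at hi; exact hi.2
            have hab : a i - b i = Real.exp (lam i * s) * ⟪UT - UTe, φ i⟫ := by
              simp [ha, hb, inner_sub_left]; ring
            rw [hab, mul_pow]
            have hee : Real.exp (lam i * s) ≤ Real.exp (Me * s) :=
              Real.exp_le_exp.mpr (mul_le_mul_of_nonneg_right hMi hs)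
            exact mul_le_mul_of_nonneg_right
              (pow_le_pow_left₀ (Real.exp_pos _).le hee 2) (sq_nonneg _)
        _ ≤ ∑ i : Fin n, Real.exp (Me * s) ^ 2 * (⟪UT - UTe, φ i⟫) ^ 2 := by
            apply Finset.sum_le_sum_of_subset_of_nonneg (Finset.filter_subset _ _)
            intro i _ _; positivity
    have h' := Real.sqrt_le_sqrt hsq
    rw [Real.sqrt_sq (norm_nonneg _), Real.sqrt_sq (by positivity)] at h'
    calc ‖∑ i ∈ Θ, (a i - b i) • φ i‖ ≤ Real.exp (Me * s) * ‖UT - UTe‖ := h'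
      _ ≤ Real.exp (Me * s) * ε := by
          exact mul_le_mul_of_nonneg_left hnoise (le_of_lt (Real.exp_pos _))
  calc ‖(∑ i ∈ Θc, a i • φ i) + ∑ i ∈ Θ, (a i - b i) • φ i‖
      ≤ ‖∑ i ∈ Θc, a i • φ i‖ + ‖∑ i ∈ Θ, (a i - b i) • φ i‖ := norm_add_le _ _
    _ ≤ Me⁻¹ * ‖-∑ i : Fin n, c i • φ i‖ + Real.exp (Me * s) * ε := add_le_add h1 h2
end

section
/- Let ε ∈ (0,1), γ ∈ (0,1), 0 ≤ t ≤ T, and choose the regularization parameter M_ε = T^{-1} ln(ε^{-γ}). If U_T, U_T^ε ∈ ℝⁿ satisfy ‖U_T − U_T^ε‖ ≤ ε, then ‖U(t) − P^ε U^ε(t)‖ ≤ (T / ln(ε^{-γ})) ‖U′(t)‖ + ε^{1 − γ(1 − t/T)}, where U′(t) = − Σ_{i=1}^n λ_i e^{λ_i(T−t)} ⟨U_T, φ_i⟩ φ_i. (Convergence rate (fff) of the paper's Theorem 4.) -/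
open scoped RealInnerProductSpace BigOperators

lemma norm_sq_sum_orthonormal {n : ℕ} {E : Type*} [NormedAddCommGroup E]
    [InnerProductSpace ℝ E] {v : Fin n → E} (hv : Orthonormal ℝ v)
    (l : Fin n → ℝ) (s : Finset (Fin n)) :
    ‖∑ i ∈ s, l i • v i‖ ^ 2 = ∑ i ∈ s, (l i) ^ 2 := by
  rw [← real_inner_self_eq_norm_sq, hv.inner_sum]
  simp [sq]

/-- Convergence rate (fff) of the paper's Theorem 4: with
`M_ε = T⁻¹ ln(ε^{-γ})`, one has
`‖U(t) − P^ε U^ε(t)‖ ≤ (T / ln(ε^{-γ})) ‖U′(t)‖ + ε^{1 − γ(1 − t/T)}`. -/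
theorem convergence_rate (n : ℕ) (hn : 0 < n)
    (φ : OrthonormalBasis (Fin n) ℝ (EuclideanSpace ℝ (Fin n)))
    (lam : Fin n → ℝ) (hlam : ∀ i, 0 ≤ lam i)
    (ε γ : ℝ) (hε : ε ∈ Set.Ioo (0:ℝ) 1) (hγ : γ ∈ Set.Ioo (0:ℝ) 1)
    (T t : ℝ) (hT : 0 < T) (ht0 : 0 ≤ t) (htT : t ≤ T)
    (Me : ℝ) (hMe : Me = T⁻¹ * Real.log (ε ^ (-γ)))
    (UT UTe : EuclideanSpace ℝ (Fin n))
    (hnoise : ‖UT - UTe‖ ≤ ε) :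
    ‖(∑ i : Fin n, (Real.exp (lam i * (T - t)) * ⟪UT, φ i⟫) • φ i) -
      ∑ i ∈ Finset.univ.filter (fun i => lam i ≤ Me),
        (Real.exp (lam i * (T - t)) * ⟪UTe, φ i⟫) • φ i‖
      ≤ (T / Real.log (ε ^ (-γ))) *
          ‖-∑ i : Fin n, (lam i * Real.exp (lam i * (T - t)) * ⟪UT, φ i⟫) • φ i‖
        + ε ^ (1 - γ * (1 - t / T)) := by
  obtain ⟨hε0, hε1⟩ := hε
  obtain ⟨hγ0, hγ1⟩ := hγ
  set L := Real.log (ε ^ (-γ)) with hL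
  have hlogε : Real.log ε < 0 := Real.log_neg hε0 hε1
  have hLval : L = -γ * Real.log ε := by rw [hL, Real.log_rpow hε0]
  have hLpos : 0 < L := by
    rw [hLval]; exact mul_pos_of_neg_of_neg (by linarith) hlogε
  have hMepos : 0 < Me := by rw [hMe]; exact mul_pos (inv_pos.mpr hT) hLpos
  set a : Fin n → ℝ := fun i => Real.exp (lam i * (T - t)) * ⟪UT, φ i⟫ with ha
  set b : Fin n → ℝ := fun i => Real.exp (lam i * (T - t)) * ⟪UTe, φ i⟫ with hb
  set c : Fin n → ℝ := fun i => lam i * Real.exp (lam i * (T - t)) * ⟪UT, φ i⟫ with hc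
  set Θ : Finset (Fin n) := Finset.univ.filter (fun i => lam i ≤ Me) with hΘ
  set Θc : Finset (Fin n) := Finset.univ.filter (fun i => ¬ lam i ≤ Me) with hΘc
  have key : (∑ i : Fin n, a i • φ i) - ∑ i ∈ Θ, b i • φ i
      = (∑ i ∈ Θc, a i • φ i) + ∑ i ∈ Θ, (a i - b i) • φ i := by
    have := Finset.sum_filter_add_sum_filter_not Finset.univ
      (fun i => lam i ≤ Me) (fun i => a i • φ i)
    simp only [sub_smul, Finset.sum_sub_distrib]
    rw [← this]
    abel
  rw [key]
  have horth := φ.orthonormal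
  -- bound on tail term
  have h1 : ‖∑ i ∈ Θc, a i • φ i‖ ≤ (T / L) * ‖-∑ i : Fin n, c i • φ i‖ := by
    have hTL : 0 ≤ T / L := by positivity
    have hsq : ‖∑ i ∈ Θc, a i • φ i‖ ^ 2 ≤ ((T / L) * ‖-∑ i : Fin n, c i • φ i‖) ^ 2 := by
      rw [norm_sq_sum_orthonormal horth, norm_neg, mul_pow,
        norm_sq_sum_orthonormal horth]
      calc ∑ i ∈ Θc, a i ^ 2 ≤ ∑ i ∈ Θc, (T / L) ^ 2 * c i ^ 2 := by
            apply Finset.sum_le_sum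
            intro i hi
            have hMi : Me < lam i := by
              simp only [hΘc, Finset.mem_filter] at hi
              exact lt_of_not_ge hi.2
            have hlami : 0 < lam i := lt_trans hMepos hMi
            have hai : a i = (lam i)⁻¹ * c i := by
              rw [ha, hc]; field_simp
            rw [hai, mul_pow]
            apply mul_le_mul_of_nonneg_right _ (sq_nonneg _)
            have h1 : (lam i)⁻¹ ≤ T / L := by
              have hMeinv : Me⁻¹ = T / L := by rw [hMe]; field_simp
              rw [← hMeinv]
              exact (inv_le_inv₀ hlami hMepos).mpr hMi.le
            have h0 : 0 ≤ (lam i)⁻¹ := by positivity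
            exact pow_le_pow_left₀ h0 h1 2
        _ = (T / L) ^ 2 * ∑ i ∈ Θc, c i ^ 2 := by rw [Finset.mul_sum]
        _ ≤ (T / L) ^ 2 * ∑ i : Fin n, c i ^ 2 := by
            apply mul_le_mul_of_nonneg_left _ (sq_nonneg _)
            exact Finset.sum_le_sum_of_subset_of_nonneg (Finset.subset_univ _)
              (fun i _ _ => sq_nonneg _)
    have := Real.sqrt_le_sqrt hsq
    rwa [Real.sqrt_sq (norm_nonneg _), Real.sqrt_sq (by positivity)] at this
  -- bound on noise term
  have hE : Real.exp (Me * (T - t)) = ε ^ (-(γ * (1 - t / T))) := by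
    rw [Real.rpow_def_of_pos hε0]
    congr 1
    rw [hMe, hLval]
    field_simp
  have h2 : ‖∑ i ∈ Θ, (a i - b i) • φ i‖ ≤ ε ^ (1 - γ * (1 - t / T)) := by
    have hEpos : 0 < Real.exp (Me * (T - t)) := Real.exp_pos _
    have hsq : ‖∑ i ∈ Θ, (a i - b i) • φ i‖ ^ 2
        ≤ (Real.exp (Me * (T - t)) * ε) ^ 2 := by
      rw [norm_sq_sum_orthonormal horth]
      have hd : ∀ i, a i - b i = Real.exp (lam i * (T - t)) * ⟪UT - UTe, φ i⟫ := by
        intro i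
        rw [ha, hb]
        simp [inner_sub_left]
        ring
      calc ∑ i ∈ Θ, (a i - b i) ^ 2
          ≤ ∑ i ∈ Θ, Real.exp (Me * (T - t)) ^ 2 * ⟪UT - UTe, φ i⟫ ^ 2 := by
            apply Finset.sum_le_sum
            intro i hi
            have hMi : lam i ≤ Me := by
              simp only [hΘ, Finset.mem_filter] at hi; exact hi.2
            rw [hd i, mul_pow]
            apply mul_le_mul_of_nonneg_right _ (sq_nonneg _)
            apply pow_le_pow_left₀ (Real.exp_pos _).le
            exact Real.exp_le_exp.mpr (mul_le_mul_of_nonneg_right hMi (by linarith))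
        _ = Real.exp (Me * (T - t)) ^ 2 * ∑ i ∈ Θ, ⟪UT - UTe, φ i⟫ ^ 2 := by
            rw [Finset.mul_sum]
        _ ≤ Real.exp (Me * (T - t)) ^ 2 * ∑ i : Fin n, ⟪UT - UTe, φ i⟫ ^ 2 := by
            apply mul_le_mul_of_nonneg_left _ (sq_nonneg _)
            exact Finset.sum_le_sum_of_subset_of_nonneg (Finset.subset_univ _)
              (fun i _ _ => sq_nonneg _)
        _ = Real.exp (Me * (T - t)) ^ 2 * ‖UT - UTe‖ ^ 2 := by
            congr 1
            have hrepr := φ.sum_repr' (UT - UTe)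
            have := norm_sq_sum_orthonormal horth
              (fun i => ⟪φ i, UT - UTe⟫) Finset.univ
            rw [hrepr] at this
            rw [this]
            exact Finset.sum_congr rfl fun i _ => by rw [real_inner_comm]
        _ ≤ (Real.exp (Me * (T - t)) * ε) ^ 2 := by
            rw [mul_pow]
            apply mul_le_mul_of_nonneg_left _ (sq_nonneg _)
            exact pow_le_pow_left₀ (norm_nonneg _) hnoise 2
    have := Real.sqrt_le_sqrt hsq
    rw [Real.sqrt_sq (norm_nonneg _), Real.sqrt_sq (by positivity)] at this
    calc ‖∑ i ∈ Θ, (a i - b i) • φ i‖ ≤ Real.exp (Me * (T - t)) * ε := this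
      _ = ε ^ (-(γ * (1 - t / T))) * ε ^ (1:ℝ) := by rw [hE, Real.rpow_one]
      _ = ε ^ (1 - γ * (1 - t / T)) := by
          rw [← Real.rpow_add hε0]; ring_nf
  calc ‖(∑ i ∈ Θc, a i • φ i) + ∑ i ∈ Θ, (a i - b i) • φ i‖
      ≤ ‖∑ i ∈ Θc, a i • φ i‖ + ‖∑ i ∈ Θ, (a i - b i) • φ i‖ := norm_add_le _ _
    _ ≤ (T / L) * ‖-∑ i : Fin n, c i • φ i‖ + ε ^ (1 - γ * (1 - t / T)) :=
        add_le_add h1 h2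
end

section
/- Let ε ∈ (0,1), γ ∈ (0,1), and choose M_ε = T^{-1} ln(ε^{-γ}). If ‖U_T − U_T^ε‖ ≤ ε, then at the initial time t = 0 the reconstruction error satisfies ‖U(0) − P^ε U^ε(0)‖ ≤ (T / ln(ε^{-γ})) ‖U′(0)‖ + ε^{1−γ}, where U′(0) = − Σ_{i=1}^n λ_i e^{λ_i T} ⟨U_T, φ_i⟩ φ_i. (Initial-time estimate from the remark after Theorem 4.) -/
open scoped RealInnerProductSpace BigOperators

/-- Initial-time estimate from the remark after Theorem 4: with
`M_ε = T⁻¹ ln(ε^{-γ})`, at `t = 0`,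
`‖U(0) − P^ε U^ε(0)‖ ≤ (T / ln(ε^{-γ})) ‖U′(0)‖ + ε^{1−γ}`. -/
theorem initial_time_estimate (n : ℕ) (hn : 0 < n)
    (φ : OrthonormalBasis (Fin n) ℝ (EuclideanSpace ℝ (Fin n)))
    (lam : Fin n → ℝ) (hlam : ∀ i, 0 ≤ lam i)
    (ε γ : ℝ) (hε : ε ∈ Set.Ioo (0:ℝ) 1) (hγ : γ ∈ Set.Ioo (0:ℝ) 1)
    (T : ℝ) (hT : 0 < T)
    (Me : ℝ) (hMe : Me = T⁻¹ * Real.log (ε ^ (-γ)))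
    (UT UTe : EuclideanSpace ℝ (Fin n))
    (hnoise : ‖UT - UTe‖ ≤ ε) :
    ‖(∑ i : Fin n, (Real.exp (lam i * T) * ⟪UT, φ i⟫) • φ i) -
      ∑ i ∈ Finset.univ.filter (fun i => lam i ≤ Me),
        (Real.exp (lam i * T) * ⟪UTe, φ i⟫) • φ i‖
      ≤ (T / Real.log (ε ^ (-γ))) *
          ‖-∑ i : Fin n, (lam i * Real.exp (lam i * T) * ⟪UT, φ i⟫) • φ i‖
        + ε ^ (1 - γ) := by
  classical
  obtain ⟨hε0, hε1⟩ := hε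
  obtain ⟨hγ0, hγ1⟩ := hγ
  have hv := φ.orthonormal
  set L := Real.log (ε ^ (-γ)) with hL
  have hLval : L = -γ * Real.log ε := by rw [hL, Real.log_rpow hε0]
  have hLpos : 0 < L := by
    rw [hLval]
    have := Real.log_neg hε0 hε1
    nlinarith
  have hMepos : 0 < Me := by rw [hMe]; positivity
  have hMeT : Me * T = L := by rw [hMe]; field_simp
  -- norm squared of orthonormal combinations
  have normsq : ∀ (s : Finset (Fin n)) (c : Fin n → ℝ),
      ‖∑ i ∈ s, c i • φ i‖ ^ 2 = ∑ i ∈ s, (c i) ^ 2 := by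
    intro s c
    rw [← real_inner_self_eq_norm_sq, hv.inner_sum]
    simp [sq]
  set a : Fin n → ℝ := fun i => Real.exp (lam i * T) * ⟪UT, φ i⟫ with ha
  set c : Fin n → ℝ := fun i => Real.exp (lam i * T) * ⟪UTe, φ i⟫ with hc
  set Θ : Finset (Fin n) := Finset.univ.filter (fun i => lam i ≤ Me) with hΘ
  set Θc : Finset (Fin n) := Finset.univ.filter (fun i => ¬ lam i ≤ Me) with hΘc
  set N : ℝ := ‖-∑ i : Fin n, (lam i * Real.exp (lam i * T) * ⟪UT, φ i⟫) • φ i‖ with hN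
  have hNnn : 0 ≤ N := norm_nonneg _
  have hN2 : N ^ 2 = ∑ i : Fin n, (lam i * a i) ^ 2 := by
    rw [hN, norm_neg, normsq]
    refine Finset.sum_congr rfl fun i _ => ?_
    rw [ha]; ring
  -- decomposition
  have hdecomp : (∑ i : Fin n, a i • φ i) - ∑ i ∈ Θ, c i • φ i
      = (∑ i ∈ Θc, a i • φ i) + ∑ i ∈ Θ, (a i - c i) • φ i := by
    rw [← Finset.sum_filter_add_sum_filter_not Finset.univ (fun i => lam i ≤ Me)
      (fun i => a i • φ i)]
    simp only [sub_smul, Finset.sum_sub_distrib]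
    abel
  -- bound on the high-frequency part
  have hA2 : ‖∑ i ∈ Θc, a i • φ i‖ ^ 2 ≤ (Me⁻¹ * N) ^ 2 := by
    rw [normsq, mul_pow, hN2]
    calc ∑ i ∈ Θc, a i ^ 2 ≤ ∑ i ∈ Θc, Me⁻¹ ^ 2 * (lam i * a i) ^ 2 := by
          refine Finset.sum_le_sum fun i hi => ?_
          have hi' : Me < lam i := by
            simp only [hΘc, Finset.mem_filter] at hi
            exact lt_of_not_ge hi.2
          have hsq : Me ^ 2 ≤ lam i ^ 2 := by nlinarith
          have h1 : a i ^ 2 = Me⁻¹ ^ 2 * (Me ^ 2 * a i ^ 2) := by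
            field_simp
          rw [h1]
          have : Me ^ 2 * a i ^ 2 ≤ lam i ^ 2 * a i ^ 2 := by nlinarith [sq_nonneg (a i)]
          calc Me⁻¹ ^ 2 * (Me ^ 2 * a i ^ 2) ≤ Me⁻¹ ^ 2 * (lam i ^ 2 * a i ^ 2) := by
                exact mul_le_mul_of_nonneg_left this (by positivity)
            _ = (lam i * a i) ^ 2 * Me⁻¹ ^ 2 := by ring
            _ = Me⁻¹ ^ 2 * (lam i * a i) ^ 2 := by ring
      _ ≤ ∑ i : Fin n, Me⁻¹ ^ 2 * (lam i * a i) ^ 2 := by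
          refine Finset.sum_le_sum_of_subset_of_nonneg (Finset.subset_univ _)
            fun i _ _ => by positivity
      _ = Me⁻¹ ^ 2 * ∑ i : Fin n, (lam i * a i) ^ 2 := by rw [Finset.mul_sum]
  have hA : ‖∑ i ∈ Θc, a i • φ i‖ ≤ Me⁻¹ * N := by
    have h := Real.sqrt_le_sqrt hA2
    rwa [Real.sqrt_sq (norm_nonneg _), Real.sqrt_sq (by positivity)] at h
  -- bound on the low-frequency (noise) part
  have hεγpos : (0:ℝ) < ε ^ (-γ) := Real.rpow_pos_of_pos hε0 _
  have hexp : ∀ i ∈ Θ, Real.exp (lam i * T) ≤ ε ^ (-γ) := by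
    intro i hi
    simp only [hΘ, Finset.mem_filter] at hi
    have : lam i * T ≤ L := by
      rw [← hMeT]
      exact mul_le_mul_of_nonneg_right hi.2 hT.le
    calc Real.exp (lam i * T) ≤ Real.exp L := Real.exp_le_exp.mpr this
      _ = ε ^ (-γ) := by rw [hL, Real.exp_log hεγpos]
  have hbessel : ∑ i ∈ Θ, ⟪UT - UTe, φ i⟫ ^ 2 ≤ ‖UT - UTe‖ ^ 2 := by
    have := hv.sum_inner_products_le (s := Θ) (UT - UTe)
    simpa [real_inner_comm, Real.norm_eq_abs, sq_abs, mul_comm] using this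
  have hB2 : ‖∑ i ∈ Θ, (a i - c i) • φ i‖ ^ 2 ≤ (ε ^ (1 - γ)) ^ 2 := by
    rw [normsq]
    have hstep : ∀ i ∈ Θ, (a i - c i) ^ 2 ≤ (ε ^ (-γ)) ^ 2 * ⟪UT - UTe, φ i⟫ ^ 2 := by
      intro i hi
      have hi2 : a i - c i = Real.exp (lam i * T) * ⟪UT - UTe, φ i⟫ := by
        rw [ha, hc]; simp [inner_sub_left]; ring
      rw [hi2, mul_pow]
      have h1 : Real.exp (lam i * T) ^ 2 ≤ (ε ^ (-γ)) ^ 2 := by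
        have := hexp i hi
        nlinarith [Real.exp_pos (lam i * T)]
      exact mul_le_mul_of_nonneg_right h1 (sq_nonneg _)
    calc ∑ i ∈ Θ, (a i - c i) ^ 2
        ≤ ∑ i ∈ Θ, (ε ^ (-γ)) ^ 2 * ⟪UT - UTe, φ i⟫ ^ 2 := Finset.sum_le_sum hstep
      _ = (ε ^ (-γ)) ^ 2 * ∑ i ∈ Θ, ⟪UT - UTe, φ i⟫ ^ 2 := by rw [Finset.mul_sum]
      _ ≤ (ε ^ (-γ)) ^ 2 * ‖UT - UTe‖ ^ 2 := by
          exact mul_le_mul_of_nonneg_left hbessel (by positivity)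
      _ ≤ (ε ^ (-γ)) ^ 2 * ε ^ 2 := by
          have : ‖UT - UTe‖ ^ 2 ≤ ε ^ 2 := by nlinarith [norm_nonneg (UT - UTe)]
          exact mul_le_mul_of_nonneg_left this (by positivity)
      _ = (ε ^ (1 - γ)) ^ 2 := by
          have : ε ^ (1 - γ) = ε ^ (-γ) * ε := by
            rw [show (1:ℝ) - γ = -γ + 1 by ring, Real.rpow_add hε0, Real.rpow_one]
          rw [this]; ring
  have hB : ‖∑ i ∈ Θ, (a i - c i) • φ i‖ ≤ ε ^ (1 - γ) := by
    have h := Real.sqrt_le_sqrt hB2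
    rwa [Real.sqrt_sq (norm_nonneg _), Real.sqrt_sq (Real.rpow_nonneg hε0.le _)] at h
  have hTL : T / L = Me⁻¹ := by
    rw [hMe, mul_inv, inv_inv, div_eq_mul_inv]
  calc ‖(∑ i : Fin n, a i • φ i) - ∑ i ∈ Θ, c i • φ i‖
      = ‖(∑ i ∈ Θc, a i • φ i) + ∑ i ∈ Θ, (a i - c i) • φ i‖ := by rw [hdecomp]
    _ ≤ ‖∑ i ∈ Θc, a i • φ i‖ + ‖∑ i ∈ Θ, (a i - c i) • φ i‖ := norm_add_le _ _
    _ ≤ Me⁻¹ * N + ε ^ (1 - γ) := add_le_add hA hB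
    _ = (T / L) * N + ε ^ (1 - γ) := by rw [hTL]
end
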